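/- Let (X,ℬ) be a t-(n,a,1)-design on an n-element set X (n > a ≥ t ≥ 1). For every a-element subset B of X, the number of permutations π of X such that B belongs to π(ℬ) = {π(H) : H ∈ ℬ} equals n!/C(n−t,a−t); equivalently, C(n−t,a−t)·|{π ∈ Sym(X) : B ∈ π(ℬ)}| = n!, where C denotes the binomial coefficient. (This computes the equitability parameter γ = m/C(n−t,a−t) for the strategy obtained by letting the symmetric group act on a starting design.) -/

import Mathlib

open Finset

/-- Any two finsets of the same cardinality in a fintype are related by a permutation. -/
lemma exists_perm_image {α : Type*} [Fintype α] [DecidableEq α] (H H' : Finset α)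
    (h : H.card = H'.card) : ∃ g : Equiv.Perm α, H.image g = H' := by
  classical
  have e1 : {x : α // x ∈ H} ≃ {x : α // x ∈ H'} :=
    Fintype.equivOfCardEq (by simp [Fintype.card_coe, h])
  have e2 : {x : α // ¬ x ∈ H} ≃ {x : α // ¬ x ∈ H'} :=
    Fintype.equivOfCardEq (by
      rw [Fintype.card_subtype_compl, Fintype.card_subtype_compl]
      simp [Fintype.card_coe, h])
  set g : Equiv.Perm α := (Equiv.sumCompl (· ∈ H)).symm.trans ((e1.sumCongr e2).trans
    (Equiv.sumCompl (· ∈ H'))) with hg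
  refine ⟨g, ?_⟩
  have hsub : H.image g ⊆ H' := by
    intro y hy
    rcases Finset.mem_image.mp hy with ⟨x, hx, rfl⟩
    simp only [hg, Equiv.trans_apply, Equiv.sumCompl_symm_apply_of_pos hx,
      Equiv.sumCongr_apply, Sum.map_inl, Equiv.sumCompl_apply_inl]
    exact (e1 ⟨x, hx⟩).2
  have hcard : H'.card ≤ (H.image g).card := by
    rw [Finset.card_image_of_injective _ g.injective, h]
  exact Finset.eq_of_subset_of_card_le hsub hcard

lemma image_perm_eq_iff {α : Type*} [Fintype α] [DecidableEq α] (π : Equiv.Perm α)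
    (H B : Finset α) : H.image π = B ↔ H = B.image π.symm := by
  constructor
  · rintro rfl
    ext x; simp
  · rintro rfl
    ext x; simp

/-- Theorem: let `ℬ` be a `t-(n,a,1)`-design on the `n`-element point set `α`.
For every `a`-subset `B`, the number of permutations `π` of the point set with
`B ∈ π(ℬ)` satisfies `C(n-t, a-t) · |{π : B ∈ π(ℬ)}| = n!`. -/
theorem stmt_14 {α : Type*} [Fintype α] [DecidableEq α] (n a t : ℕ)
    (hn : Fintype.card α = n)
    (hna : a < n) (hta : t ≤ a) (ht : 1 ≤ t)
    (ℬ : Finset (Finset α))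
    (hblocks : ∀ H ∈ ℬ, H.card = a)
    (hdesign : ∀ T : Finset α, T.card = t → (ℬ.filter fun H => T ⊆ H).card = 1)
    (B : Finset α) (hB : B.card = a) :
    (n - t).choose (a - t) *
        (Finset.univ.filter fun π : Equiv.Perm α =>
          B ∈ ℬ.image fun H => H.image π).card = n.factorial := by
  classical
  set fib : Finset α → Finset (Equiv.Perm α) :=
    fun H => Finset.univ.filter (fun π => B.image π.symm = H) with hfib
  -- all fibers over a-sets have the same cardinality
  have fib_mem : ∀ (H : Finset α) (π : Equiv.Perm α), π ∈ fib H ↔ B.image π.symm = H := by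
    intro H π; simp [hfib]
  have fib_const : ∀ H H' : Finset α, H.card = a → H'.card = a →
      (fib H).card = (fib H').card := by
    intro H H' hH hH'
    obtain ⟨g, hg⟩ := exists_perm_image H H' (hH.trans hH'.symm)
    have hg' : H'.image g.symm = H := by
      rw [← hg]; ext x; simp
    have key : ∀ (γ σ : Equiv.Perm α) (K K' : Finset α), K.image γ = K' →
        B.image σ.symm = K → B.image (γ.symm.trans σ).symm = K' := by
      intro γ σ K K' hK hσ
      have h1 : (γ.symm.trans σ).symm = σ.symm.trans γ := by
        ext x; simp
      rw [h1, ← hK, ← hσ]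
      ext x; simp [Equiv.trans_apply]
    apply Finset.card_bij' (fun π _ => g.symm.trans π) (fun π _ => g.trans π)
    · intro π hπ
      rw [fib_mem] at hπ ⊢
      exact key g π H H' hg hπ
    · intro π hπ
      rw [fib_mem] at hπ ⊢
      have : g.trans π = (g.symm).symm.trans π := by simp
      rw [this]
      exact key g.symm π H' H hg' hπ
    · intro π _
      ext x; simp
    · intro π _
      ext x; simp
  set c := (fib B).card with hc
  -- the count in question equals (number of blocks) * c
  have stepA : (Finset.univ.filter fun π : Equiv.Perm α =>
      B ∈ ℬ.image fun H => H.image π) =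
      Finset.univ.filter fun π : Equiv.Perm α => B.image π.symm ∈ ℬ := by
    apply Finset.filter_congr
    intro π _
    simp only [Finset.mem_image, eq_iff_iff]
    constructor
    · rintro ⟨H, hH, hHB⟩
      rwa [(image_perm_eq_iff π H B).mp hHB] at hH
    · intro h
      exact ⟨B.image π.symm, h, (image_perm_eq_iff π _ B).mpr rfl⟩
  have stepB : (Finset.univ.filter fun π : Equiv.Perm α => B.image π.symm ∈ ℬ).card
      = ℬ.card * c := by
    rw [Finset.card_eq_sum_card_fiberwise
      (f := fun π : Equiv.Perm α => B.image π.symm)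
      (s := Finset.univ.filter fun π : Equiv.Perm α => B.image π.symm ∈ ℬ) (t := ℬ)
      (fun π hπ => (Finset.mem_filter.mp hπ).2)]
    rw [Finset.sum_congr rfl (fun H hH => ?_), Finset.sum_const, smul_eq_mul]
    have : (Finset.univ.filter fun π : Equiv.Perm α => B.image π.symm ∈ ℬ).filter
        (fun π => B.image π.symm = H) = fib H := by
      ext π
      simp only [Finset.mem_filter, Finset.mem_univ, true_and, fib_mem]
      constructor
      · rintro ⟨_, h⟩; exact h
      · rintro rfl; exact ⟨hH, rfl⟩
    rw [this]
    exact fib_const H B (hblocks H hH) hB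
  -- total count: n! = C(n,a) * c
  have stepC : n.factorial = n.choose a * c := by
    have := Finset.card_eq_sum_card_fiberwise
      (f := fun π : Equiv.Perm α => B.image π.symm) (s := Finset.univ)
      (t := Finset.univ.powersetCard a)
      (fun π _ => by
        simp [Finset.mem_powersetCard, Finset.card_image_of_injective _ π.symm.injective, hB])
    rw [Finset.card_univ, Fintype.card_perm, hn] at this
    rw [this, Finset.sum_congr rfl (fun H hH => ?_), Finset.sum_const, smul_eq_mul,
      Finset.card_powersetCard, Finset.card_univ, hn]
    have : Finset.univ.filter (fun π : Equiv.Perm α => B.image π.symm = H) = fib H := rfl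
    rw [this]
    exact fib_const H B (Finset.mem_powersetCard.mp hH).2 hB
  -- double counting: ℬ.card * C(a,t) = C(n,t)
  have stepE : ℬ.card * a.choose t = n.choose t := by
    have lhs : ∑ T ∈ Finset.univ.powersetCard t, (ℬ.filter fun H => T ⊆ H).card
        = n.choose t := by
      rw [Finset.sum_congr rfl (fun T hT =>
        hdesign T (Finset.mem_powersetCard.mp hT).2), Finset.sum_const, smul_eq_mul,
        mul_one, Finset.card_powersetCard, Finset.card_univ, hn]
    have swap : ∑ T ∈ Finset.univ.powersetCard t, (ℬ.filter fun H => T ⊆ H).card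
        = ∑ H ∈ ℬ, ((Finset.univ.powersetCard t).filter fun T => T ⊆ H).card := by
      simp only [Finset.card_filter]
      rw [Finset.sum_comm]
    rw [swap] at lhs
    rw [← lhs]
    rw [Finset.sum_congr rfl (fun H hH => ?_), Finset.sum_const, smul_eq_mul]
    have : (Finset.univ.powersetCard t).filter (fun T => T ⊆ H) = H.powersetCard t := by
      ext T
      simp only [Finset.mem_filter, Finset.mem_powersetCard, Finset.subset_univ, true_and]
      tauto
    rw [this, Finset.card_powersetCard, hblocks H hH]
  -- final arithmetic
  rw [stepA, stepB]
  have hat : 0 < a.choose t := Nat.choose_pos hta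
  apply Nat.eq_of_mul_eq_mul_left hat
  calc a.choose t * ((n - t).choose (a - t) * (ℬ.card * c))
      = (ℬ.card * a.choose t) * ((n - t).choose (a - t) * c) := by ring
    _ = n.choose t * ((n - t).choose (a - t) * c) := by rw [stepE]
    _ = (n.choose t * (n - t).choose (a - t)) * c := by ring
    _ = (n.choose a * a.choose t) * c := by rw [← Nat.choose_mul hta]
    _ = a.choose t * (n.choose a * c) := by ring
    _ = a.choose t * n.factorial := by rw [← stepC]
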